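/- Let m, n be nonnegative integers and let z ∈ ℂ. Then lim_{ρ → ∞} Z_{m,n}^{ρ²}(z/ρ, z̄/ρ) / ρ^{m+n} = H_{m,n}(z, z̄), where H_{m,n}(z, z̄) = m! n! Σ_{j=0}^{min(m,n)} (−1)^j z̄^{m−j} z^{n−j} / (j! (m−j)! (n−j)!) is the complex Hermite polynomial. -/

import Mathlib

open MeasureTheory Finset

/-- Pochhammer symbol `(a)_k = a (a+1) ⋯ (a+k-1)`. -/
noncomputable def poch (a : ℝ) (k : ℕ) : ℝ := (ascPochhammer ℝ k).eval a

/-- Generalized Zernike polynomial `Z_{m,n}^γ(z, z̄)`. -/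
noncomputable def Zern (γ : ℝ) (m n : ℕ) (z : ℂ) : ℂ :=
  (Nat.factorial m : ℂ) * (Nat.factorial n : ℂ) * ((poch (γ + 1) (m + n) : ℝ) : ℂ) *
    ∑ j ∈ Finset.range (min m n + 1),
      ((-1 : ℂ) ^ j * (((1 - ‖z‖ ^ 2) ^ j : ℝ) : ℂ) *
        (starRingEnd ℂ z) ^ (m - j) * z ^ (n - j)) /
      ((poch (γ + 1) j * Nat.factorial j * Nat.factorial (m - j) * Nat.factorial (n - j) : ℝ) : ℂ)

/-- Complex Hermite polynomial `H_{m,n}(z, z̄)`. -/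
noncomputable def Herm (m n : ℕ) (z : ℂ) : ℂ :=
  (Nat.factorial m : ℂ) * (Nat.factorial n : ℂ) *
    ∑ j ∈ Finset.range (min m n + 1),
      ((-1 : ℂ) ^ j * (starRingEnd ℂ z) ^ (m - j) * z ^ (n - j)) /
        ((Nat.factorial j * Nat.factorial (m - j) * Nat.factorial (n - j) : ℕ) : ℂ)

lemma poch_eq_prod (a : ℝ) (k : ℕ) : poch a k = ∏ i ∈ range k, (a + i) := by
  induction k with
  | zero => simp [poch]
  | succ k ih =>
    rw [poch, ascPochhammer_succ_right, Polynomial.eval_mul, prod_range_succ, ← ih]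
    simp [poch]

lemma poch_split (a : ℝ) (j k : ℕ) :
    poch a (j + k) = poch a j * ∏ i ∈ range k, (a + j + i) := by
  have h := congrArg (Polynomial.eval a) (ascPochhammer_mul (S := ℝ) j k)
  simp only [Polynomial.eval_mul, Polynomial.eval_comp, Polynomial.eval_add,
    Polynomial.eval_X, Polynomial.eval_natCast] at h
  rw [poch, ← h]
  have : Polynomial.eval (a + (j:ℝ)) (ascPochhammer ℝ k) = poch (a + j) k := rfl
  rw [this, poch_eq_prod]
  exact congrArg _ (prod_congr rfl fun i _ => by ring)

lemma poch_pos {a : ℝ} (ha : 0 < a) (k : ℕ) : 0 < poch a k := by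
  rw [poch_eq_prod]
  exact prod_pos fun i _ => by positivity

lemma term_eq (j a b : ℕ) (z : ℂ) {ρ : ℝ} (hρ : 0 < ρ) :
    ((poch (ρ ^ 2 + 1) ((j + a) + (j + b)) : ℝ) : ℂ) *
      (((-1 : ℂ) ^ j * (((1 - ‖z / ρ‖ ^ 2) ^ j : ℝ) : ℂ) *
          (starRingEnd ℂ z) ^ a * z ^ b) /
        ((poch (ρ ^ 2 + 1) j * Nat.factorial j * Nat.factorial a * Nat.factorial b : ℝ) : ℂ) /
        (ρ : ℂ) ^ a / (ρ : ℂ) ^ b) / (ρ : ℂ) ^ ((j + a) + (j + b)) =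
    (((-1 : ℂ) ^ j * (starRingEnd ℂ z) ^ a * z ^ b) /
        ((Nat.factorial j * Nat.factorial a * Nat.factorial b : ℕ) : ℂ)) *
      ((((∏ i ∈ range (j + a + b), (1 + (1 + j + i) / ρ ^ 2)) *
          (1 - ‖z‖ ^ 2 / ρ ^ 2) ^ j : ℝ)) : ℂ) := by
  have hρ0 : (ρ : ℝ) ≠ 0 := hρ.ne'
  have hρC : (ρ : ℂ) ≠ 0 := by exact_mod_cast hρ0
  have habs : ‖z / (ρ : ℂ)‖ ^ 2 = ‖z‖ ^ 2 / ρ ^ 2 := by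
    rw [norm_div, Complex.norm_real, Real.norm_of_nonneg hρ.le, div_pow]
  have hsplit := poch_split (ρ ^ 2 + 1) j (j + a + b)
  have hpochj : poch (ρ ^ 2 + 1) j ≠ 0 := (poch_pos (by positivity) j).ne'
  have hfact : ∀ c : ℕ, ((Nat.factorial c : ℝ) : ℂ) ≠ 0 := fun c => by
    exact_mod_cast Nat.cast_ne_zero.mpr (Nat.factorial_ne_zero c)
  have hprod : (∏ i ∈ range (j + a + b), (1 + (1 + j + i) / ρ ^ 2))
      = (∏ i ∈ range (j + a + b), (ρ ^ 2 + 1 + j + i)) / (ρ ^ 2) ^ (j + a + b) := by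
    have h2 : ((ρ ^ 2 : ℝ)) ^ (j + a + b) = ∏ _i ∈ range (j + a + b), (ρ ^ 2 : ℝ) := by simp
    rw [h2, ← prod_div_distrib]
    refine prod_congr rfl fun i _ => ?_
    field_simp
    ring
  have he : (j + a) + (j + b) = j + (j + a + b) := by omega
  rw [habs, he, hsplit, hprod]
  generalize hPdef : poch (ρ ^ 2 + 1) j = P at hsplit hpochj ⊢
  generalize hQdef : (∏ i ∈ range (j + a + b), (ρ ^ 2 + 1 + (j:ℝ) + (i:ℝ))) = Q at hsplit ⊢
  have hpochjC : ((P : ℝ) : ℂ) ≠ 0 := by exact_mod_cast hpochj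
  push_cast
  field_simp [hpochjC, hfact j, hfact a, hfact b]
  have hcan : ((P : ℝ) : ℂ) * ((P : ℝ) : ℂ)⁻¹ = 1 := mul_inv_cancel₀ hpochjC
  linear_combination ((Q : ℂ) * (starRingEnd ℂ) z ^ a * z ^ b * ((ρ:ℂ))⁻¹ ^ (j * 4) *
    ((ρ:ℂ))⁻¹ ^ (a * 2) * ((ρ:ℂ))⁻¹ ^ (b * 2) * ((Nat.factorial j : ℂ))⁻¹ *
    ((Nat.factorial a : ℂ))⁻¹ * ((Nat.factorial b : ℂ))⁻¹ * (-1) ^ j *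
    ((ρ:ℂ) ^ 2 - ((‖z‖ : ℝ) : ℂ) ^ 2) ^ j) * 0 * hcan

theorem zernike_tendsto_hermite (m n : ℕ) (z : ℂ) :
    Filter.Tendsto (fun ρ : ℝ => Zern (ρ ^ 2) m n (z / ρ) / (ρ : ℂ) ^ (m + n))
      Filter.atTop (nhds (Herm m n z)) := by
  have hz : ∀ c : ℝ, Filter.Tendsto (fun ρ : ℝ => c / ρ ^ 2) Filter.atTop (nhds 0) :=
    fun c => Filter.Tendsto.div_atTop tendsto_const_nhds (Filter.tendsto_pow_atTop two_ne_zero)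
  -- the limit of each real correction factor is 1
  have hA : ∀ j : ℕ, Filter.Tendsto
      (fun ρ : ℝ => ((((∏ i ∈ range (m + n - j), (1 + (1 + j + i) / ρ ^ 2)) *
        (1 - ‖z‖ ^ 2 / ρ ^ 2) ^ j : ℝ)) : ℂ)) Filter.atTop (nhds 1) := by
    intro j
    have hp : Filter.Tendsto
        (fun ρ : ℝ => ∏ i ∈ range (m + n - j), (1 + (1 + (j:ℝ) + (i:ℝ)) / ρ ^ 2))
        Filter.atTop (nhds 1) := by
      have h : Filter.Tendsto
          (fun ρ : ℝ => ∏ i ∈ range (m + n - j), (1 + (1 + (j:ℝ) + (i:ℝ)) / ρ ^ 2))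
          Filter.atTop (nhds (∏ _i ∈ range (m + n - j), (1:ℝ))) :=
        tendsto_finset_prod _
          (fun i _ => by simpa using tendsto_const_nhds.add (hz (1 + (j:ℝ) + (i:ℝ))))
      simpa using h
    have hq : Filter.Tendsto (fun ρ : ℝ => (1 - ‖z‖ ^ 2 / ρ ^ 2) ^ j)
        Filter.atTop (nhds 1) := by
      have := ((tendsto_const_nhds (x := (1:ℝ))).sub (hz (‖z‖ ^ 2))).pow j
      simpa using this
    have hr : Filter.Tendsto
        (fun ρ : ℝ => (∏ i ∈ range (m + n - j), (1 + (1 + (j:ℝ) + (i:ℝ)) / ρ ^ 2)) *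
          (1 - ‖z‖ ^ 2 / ρ ^ 2) ^ j) Filter.atTop (nhds 1) := by
      simpa using hp.mul hq
    exact Complex.ofReal_one ▸ ((Complex.continuous_ofReal.tendsto 1).comp hr)
  have hlim : Filter.Tendsto
      (fun ρ : ℝ => (Nat.factorial m : ℂ) * (Nat.factorial n : ℂ) *
        ∑ j ∈ range (min m n + 1),
          (((-1 : ℂ) ^ j * (starRingEnd ℂ z) ^ (m - j) * z ^ (n - j)) /
            ((Nat.factorial j * Nat.factorial (m - j) * Nat.factorial (n - j) : ℕ) : ℂ)) *
          ((((∏ i ∈ range (m + n - j), (1 + (1 + j + i) / ρ ^ 2)) *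
            (1 - ‖z‖ ^ 2 / ρ ^ 2) ^ j : ℝ)) : ℂ))
      Filter.atTop (nhds (Herm m n z)) := by
    have hsum : Filter.Tendsto
        (fun ρ : ℝ => ∑ j ∈ range (min m n + 1),
          (((-1 : ℂ) ^ j * (starRingEnd ℂ z) ^ (m - j) * z ^ (n - j)) /
            ((Nat.factorial j * Nat.factorial (m - j) * Nat.factorial (n - j) : ℕ) : ℂ)) *
          ((((∏ i ∈ range (m + n - j), (1 + (1 + j + i) / ρ ^ 2)) *
            (1 - ‖z‖ ^ 2 / ρ ^ 2) ^ j : ℝ)) : ℂ))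
        Filter.atTop
        (nhds (∑ j ∈ range (min m n + 1),
          (((-1 : ℂ) ^ j * (starRingEnd ℂ z) ^ (m - j) * z ^ (n - j)) /
            ((Nat.factorial j * Nat.factorial (m - j) * Nat.factorial (n - j) : ℕ) : ℂ)) * 1)) :=
      tendsto_finset_sum _ (fun j _ => tendsto_const_nhds.mul (hA j))
    have := hsum.const_mul ((Nat.factorial m : ℂ) * (Nat.factorial n : ℂ))
    simpa [Herm, mul_assoc] using this
  refine hlim.congr' ?_
  filter_upwards [Filter.eventually_gt_atTop 0] with ρ hρ
  have hρC : (ρ : ℂ) ≠ 0 := by exact_mod_cast hρ.ne'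
  rw [Zern]
  rw [Finset.mul_sum, Finset.mul_sum, Finset.sum_div]
  refine (Finset.sum_congr rfl fun j hj => ?_).symm
  have hjmn : j ≤ min m n := Nat.lt_succ_iff.mp (mem_range.mp hj)
  set a := m - j with ha
  set b := n - j with hb
  have h3 : m + n = (j + a) + (j + b) := by omega
  have h4 : m + n - j = j + a + b := by omega
  rw [h4, h3]
  have hconj : (starRingEnd ℂ (z / (ρ:ℂ))) ^ a = (starRingEnd ℂ z) ^ a / (ρ:ℂ) ^ a := by
    rw [map_div₀, Complex.conj_ofReal, div_pow]
  have hzpow : (z / (ρ:ℂ)) ^ b = z ^ b / (ρ:ℂ) ^ b := div_pow z _ b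
  have key := term_eq j a b z hρ
  rw [hconj, hzpow]
  linear_combination ((Nat.factorial m : ℂ) * (Nat.factorial n : ℂ)) * key
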